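/- arXiv:2403.02696 — 3 statements merged into one kernel-verified Lean document; each statement's English description precedes it below -/
import Mathlib

section
/- Fix a > 2 and λ > 0, and define the SCAD concave component q : ℝ → ℝ by q(t) = 0 if |t| ≤ λ; q(t) = −(t² − 2λ|t| + λ²)/(2(a−1)) if λ < |t| ≤ aλ; and q(t) = (a+1)λ²/2 − λ|t| if |t| > aλ. Then q is differentiable on (0,∞) and for all t > t′ > 0 one has −(1/(a−1))(t − t′) ≤ q′(t) − q′(t′) ≤ 0. -/
/-- The SCAD concave component `q_λ`. -/
noncomputable def scadQ (a lam : ℝ) : ℝ → ℝ := fun t =>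
  if |t| ≤ lam then 0
  else if |t| ≤ a * lam then -(t ^ 2 - 2 * lam * |t| + lam ^ 2) / (2 * (a - 1))
  else (a + 1) * lam ^ 2 / 2 - lam * |t|

lemma scadQ_hasDeriv (a lam : ℝ) (ha : 2 < a) (hlam : 0 < lam) {t : ℝ} (ht : 0 < t) :
    HasDerivAt (scadQ a lam)
      (if t ≤ lam then 0 else if t ≤ a * lam then -(t - lam) / (a - 1) else -lam) t := by
  have hc : (0:ℝ) < a - 1 := by linarith
  have hne : a - 1 ≠ 0 := ne_of_gt hc
  have hlt : lam < a * lam := by nlinarith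
  -- derivative of the middle piece
  have hd2 : ∀ x : ℝ, HasDerivAt (fun x : ℝ => -(x ^ 2 - 2 * lam * x + lam ^ 2) / (2 * (a - 1)))
      (-(x - lam) / (a - 1)) x := by
    intro x
    have h : HasDerivAt (fun x : ℝ => -(x ^ 2 - 2 * lam * x + lam ^ 2) / (2 * (a - 1))) _ x := ((((hasDerivAt_pow 2 x).sub ((hasDerivAt_id x).const_mul (2 * lam))).add_const
      (lam ^ 2)).neg).div_const (2 * (a - 1))
    convert h using 1
    field_simp
    ring
  have hd3 : ∀ x : ℝ, HasDerivAt (fun x : ℝ => (a + 1) * lam ^ 2 / 2 - lam * x) (-lam) x := by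
    intro x
    have h := ((hasDerivAt_id x).const_mul lam).const_sub ((a + 1) * lam ^ 2 / 2)
    simpa using h
  -- local descriptions of scadQ
  have heq1 : ∀ x : ℝ, 0 < x → x ≤ lam → scadQ a lam x = 0 := by
    intro x hx0 hx
    simp [scadQ, abs_of_pos hx0, hx]
  have heq2 : ∀ x : ℝ, lam ≤ x → x ≤ a * lam →
      scadQ a lam x = -(x ^ 2 - 2 * lam * x + lam ^ 2) / (2 * (a - 1)) := by
    intro x hx1 hx2
    have hx0 : 0 < x := lt_of_lt_of_le hlam hx1
    simp only [scadQ, abs_of_pos hx0]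
    split_ifs with h1
    · have hxl : x = lam := le_antisymm h1 hx1
      have h0 : lam ^ 2 - 2 * lam * lam + lam ^ 2 = 0 := by ring
      rw [hxl, h0]
      simp
    · rfl
  have heq3 : ∀ x : ℝ, a * lam ≤ x →
      scadQ a lam x = (a + 1) * lam ^ 2 / 2 - lam * x := by
    intro x hx1
    have hx0 : 0 < x := lt_of_lt_of_le (lt_trans hlam hlt) hx1
    simp only [scadQ, abs_of_pos hx0]
    split_ifs with h1 h2
    · exact absurd h1 (by push_neg; linarith)
    · have hxa : x = a * lam := le_antisymm h2 hx1
      subst hxa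
      field_simp
      ring
    · rfl
  rcases lt_trichotomy t lam with h | h | h
  · rw [if_pos h.le]
    refine (hasDerivAt_const t (0:ℝ)).congr_of_eventuallyEq ?_
    filter_upwards [Ioo_mem_nhds ht h] with x hx
    exact heq1 x hx.1 hx.2.le
  · rw [if_pos h.le]
    have hleft : HasDerivWithinAt (scadQ a lam) 0 (Set.Iic t) t := by
      refine ((hasDerivAt_const t (0:ℝ)).hasDerivWithinAt).congr_of_eventuallyEq ?_ ?_
      · filter_upwards [Ioc_mem_nhdsLE_of_mem ⟨ht, le_rfl⟩] with x hx
        exact heq1 x hx.1 (hx.2.trans h.le)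
      · exact heq1 t ht h.le
    have hright : HasDerivWithinAt (scadQ a lam) 0 (Set.Ici t) t := by
      have h0 : -(t - lam) / (a - 1) = 0 := by rw [h]; simp
      have hta : t < a * lam := h ▸ hlt
      have hh := ((hd2 t).hasDerivWithinAt (s := Set.Ici t)).congr_of_eventuallyEq
        (f₁ := scadQ a lam) ?_ ?_
      · rwa [h0] at hh
      · filter_upwards [Ico_mem_nhdsGE_of_mem ⟨le_rfl, hta⟩] with x hx
        exact heq2 x (h ▸ hx.1 : lam ≤ x) hx.2.le
      · exact heq2 t h.ge hta.le
    have := hleft.union hright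
    rw [Set.Iic_union_Ici] at this
    exact this.hasDerivAt (by simp)
  · rw [if_neg (not_le.mpr h)]
    rcases lt_trichotomy t (a * lam) with h2 | h2 | h2
    · rw [if_pos h2.le]
      refine (hd2 t).congr_of_eventuallyEq ?_
      filter_upwards [Ioo_mem_nhds h h2] with x hx
      exact heq2 x hx.1.le hx.2.le
    · subst h2
      rw [if_pos le_rfl]
      have hleft : HasDerivWithinAt (scadQ a lam) (-(a * lam - lam) / (a - 1))
          (Set.Iic (a * lam)) (a * lam) := by
        refine ((hd2 (a * lam)).hasDerivWithinAt (s := Set.Iic (a * lam))).congr_of_eventuallyEq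
          ?_ ?_
        · filter_upwards [Ioc_mem_nhdsLE_of_mem ⟨hlt, le_rfl⟩] with x hx
          exact heq2 x hx.1.le hx.2
        · exact heq2 (a * lam) hlt.le le_rfl
      have hright : HasDerivWithinAt (scadQ a lam) (-(a * lam - lam) / (a - 1))
          (Set.Ici (a * lam)) (a * lam) := by
        have hval : -lam = -(a * lam - lam) / (a - 1) := by field_simp
        rw [← hval]
        refine ((hd3 (a * lam)).hasDerivWithinAt (s := Set.Ici (a * lam))).congr_of_eventuallyEq
          ?_ ?_
        · filter_upwards [self_mem_nhdsWithin] with x hx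
          exact heq3 x hx
        · exact heq3 (a * lam) le_rfl
      have := hleft.union hright
      rw [Set.Iic_union_Ici] at this
      exact this.hasDerivAt (by simp)
    · rw [if_neg (not_le.mpr h2)]
      refine (hd3 t).congr_of_eventuallyEq ?_
      filter_upwards [Ioi_mem_nhds h2] with x hx
      exact heq3 x hx.le

/-- The SCAD concave component is differentiable on `(0,∞)` and its derivative is
nonincreasing, decreasing no faster than linearly with slope `1/(a-1)`. -/
theorem scadQ_deriv_bounds (a lam : ℝ) (ha : 2 < a) (hlam : 0 < lam) :
    (∀ t : ℝ, 0 < t → DifferentiableAt ℝ (scadQ a lam) t) ∧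
    ∀ t t' : ℝ, 0 < t' → t' < t →
      -(1 / (a - 1)) * (t - t') ≤ deriv (scadQ a lam) t - deriv (scadQ a lam) t' ∧
      deriv (scadQ a lam) t - deriv (scadQ a lam) t' ≤ 0 := by
  have hc : (0:ℝ) < a - 1 := by linarith
  have hne : a - 1 ≠ 0 := ne_of_gt hc
  constructor
  · exact fun t ht => (scadQ_hasDeriv a lam ha hlam ht).differentiableAt
  · intro t t' ht' htt
    have ht : 0 < t := lt_trans ht' htt
    rw [(scadQ_hasDeriv a lam ha hlam ht).deriv, (scadQ_hasDeriv a lam ha hlam ht').deriv]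
    split_ifs with h1 h2 h3 h4 h5 h6 h7 <;>
      (try push_neg at *) <;>
      constructor <;>
      refine le_of_mul_le_mul_right ?_ hc <;>
      field_simp <;>
      nlinarith [mul_pos hc hlam]
end

section
/- Let Θ* ∈ ℝ^{d₁×d₂} have a singular value decomposition Θ* = U* D* (V*)ᵀ with U* ∈ ℝ^{d₁×d₁} and V* ∈ ℝ^{d₂×d₂} orthogonal and D* the d₁×d₂ matrix carrying the singular values of Θ* in nonincreasing order on its diagonal. Fix an integer r with 1 ≤ r ≤ min(d₁,d₂), and let U^r and V^r be the matrices of the first r columns of U* and V* respectively. Then for every Δ ∈ ℝ^{d₁×d₂} there exist Δ′, Δ″ ∈ ℝ^{d₁×d₂} such that Δ = Δ′ + Δ″, rank(Δ′) ≤ 2r, (U^r)ᵀ Δ″ = 0, Δ″ V^r = 0, and ⟨⟨Δ′, Δ″⟩⟩ = 0. -/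
open Matrix Finset

noncomputable section

variable {d₁ d₂ : ℕ}

/-- Trace inner product `⟨⟨A,B⟩⟩ = trace(AᵀB)`. -/
def tinner (A B : Matrix (Fin d₁) (Fin d₂) ℝ) : ℝ := (Aᵀ * B).trace

/-- Frobenius norm. -/
def frobNorm (A : Matrix (Fin d₁) (Fin d₂) ℝ) : ℝ := Real.sqrt (∑ i, ∑ j, (A i j) ^ 2)

/-- The (unordered, zero-padded) singular values of `A`: the square roots of the
eigenvalues of `AᵀA`. -/
def svals (A : Matrix (Fin d₁) (Fin d₂) ℝ) : Fin d₂ → ℝ :=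
  fun j => Real.sqrt ((show (Aᵀ * A).IsHermitian by
    simpa [Matrix.conjTranspose_eq_transpose_of_trivial] using
      Matrix.isHermitian_conjTranspose_mul_self A).eigenvalues j)

/-- Nuclear norm: sum of singular values. -/
def nuclearNorm (A : Matrix (Fin d₁) (Fin d₂) ℝ) : ℝ := ∑ j, svals A j

/-- Operator norm: largest singular value. -/
def opNorm (A : Matrix (Fin d₁) (Fin d₂) ℝ) : ℝ := ⨆ j, svals A j

/-- The `d₁ × d₂` "diagonal" matrix whose diagonal entries are given by `s`. -/
def svdDiag (s : Fin (min d₁ d₂) → ℝ) : Matrix (Fin d₁) (Fin d₂) ℝ :=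
  Matrix.of fun i j =>
    if h : (i : ℕ) = (j : ℕ) then
      s ⟨(i : ℕ), by have := i.isLt; have := j.isLt; omega⟩ else 0

/-- `s` is the nonincreasing sequence of singular values of `A`, witnessed by a
singular value decomposition `A = U D Vᵀ` with `U, V` orthogonal. -/
def IsSVDOf (A : Matrix (Fin d₁) (Fin d₂) ℝ) (s : Fin (min d₁ d₂) → ℝ) : Prop :=
  Antitone s ∧ (∀ j, 0 ≤ s j) ∧
    ∃ (U : Matrix (Fin d₁) (Fin d₁) ℝ) (V : Matrix (Fin d₂) (Fin d₂) ℝ),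
      Uᵀ * U = 1 ∧ U * Uᵀ = 1 ∧ Vᵀ * V = 1 ∧ V * Vᵀ = 1 ∧ A = U * svdDiag s * Vᵀ

/-- Assumption 1 of the paper on the univariate regularizer `p = p_λ`,
with concave part `q_λ t = p t - λ * |t|`. -/
structure Assumption1 (p : ℝ → ℝ) (lam μ : ℝ) : Prop where
  zero : p 0 = 0
  even : ∀ t : ℝ, p (-t) = p t
  slope_anti : AntitoneOn (fun t => p t / t) (Set.Ioi (0 : ℝ))
  diffable : ∀ t : ℝ, t ≠ 0 → DifferentiableAt ℝ p t
  deriv_tendsto : Filter.Tendsto (deriv p) (nhdsWithin 0 (Set.Ioi 0)) (nhds lam)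
  mono : MonotoneOn p (Set.Ici (0 : ℝ))
  concave : ConcaveOn ℝ (Set.Ici (0 : ℝ)) p
  weakconv : ∀ t t' : ℝ, 0 < t' → t' < t →
    deriv (fun u => p u - lam * |u|) t - deriv (fun u => p u - lam * |u|) t' ≥ -μ * (t - t')

/-- The spectral regularizer `P_λ(Θ) = ∑ⱼ p_λ(σⱼ(Θ))`. -/
def Pl (p : ℝ → ℝ) (A : Matrix (Fin d₁) (Fin d₂) ℝ) : ℝ := ∑ j, p (svals A j)

end

lemma matrix_rank_add_le_aux {d₁ d₂ : ℕ} (A B : Matrix (Fin d₁) (Fin d₂) ℝ) :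
    (A + B).rank ≤ A.rank + B.rank := by
  have h : LinearMap.range (A + B).mulVecLin ≤
      LinearMap.range A.mulVecLin ⊔ LinearMap.range B.mulVecLin := by
    rintro x ⟨v, rfl⟩
    rw [Matrix.mulVecLin_add]
    exact Submodule.add_mem_sup (LinearMap.mem_range_self _ v) (LinearMap.mem_range_self _ v)
  calc (A + B).rank
      ≤ Module.finrank ℝ ↥(LinearMap.range A.mulVecLin ⊔ LinearMap.range B.mulVecLin) :=
        Submodule.finrank_mono h
    _ ≤ A.rank + B.rank := Submodule.finrank_add_le_finrank_add_finrank _ _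

/-- Lemma 4(i): given an SVD `Θ* = U D Vᵀ` with singular values in nonincreasing
order and `1 ≤ r ≤ min(d₁,d₂)`, any `Δ` decomposes as `Δ = Δ′ + Δ″` with
`rank Δ′ ≤ 2r`, the columns of `Δ″` orthogonal to the top-`r` left singular vectors,
the rows of `Δ″` orthogonal to the top-`r` right singular vectors, and
`⟨⟨Δ′, Δ″⟩⟩ = 0`. -/
theorem error_matrix_decomposition {d₁ d₂ : ℕ} (Θstar : Matrix (Fin d₁) (Fin d₂) ℝ)
    (U : Matrix (Fin d₁) (Fin d₁) ℝ) (V : Matrix (Fin d₂) (Fin d₂) ℝ)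
    (hU : Uᵀ * U = 1) (hU' : U * Uᵀ = 1) (hV : Vᵀ * V = 1) (hV' : V * Vᵀ = 1)
    (s : Fin (min d₁ d₂) → ℝ) (hanti : Antitone s) (hpos : ∀ j, 0 ≤ s j)
    (hsvd : Θstar = U * svdDiag s * Vᵀ)
    (r : ℕ) (hr1 : 1 ≤ r) (hr2 : r ≤ min d₁ d₂)
    (Δ : Matrix (Fin d₁) (Fin d₂) ℝ) :
    ∃ Δ' Δ'' : Matrix (Fin d₁) (Fin d₂) ℝ,
      Δ = Δ' + Δ'' ∧ Δ'.rank ≤ 2 * r ∧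
      (Matrix.of fun (i : Fin d₁) (j : Fin r) =>
          U i ⟨(j : ℕ), lt_of_lt_of_le j.isLt (hr2.trans (min_le_left d₁ d₂))⟩)ᵀ * Δ'' = 0 ∧
      Δ'' * (Matrix.of fun (i : Fin d₂) (j : Fin r) =>
          V i ⟨(j : ℕ), lt_of_lt_of_le j.isLt (hr2.trans (min_le_right d₁ d₂))⟩) = 0 ∧
      tinner Δ' Δ'' = 0 := by
  classical
  set Ur : Matrix (Fin d₁) (Fin r) ℝ :=
    Matrix.of fun (i : Fin d₁) (j : Fin r) =>
      U i ⟨(j : ℕ), lt_of_lt_of_le j.isLt (hr2.trans (min_le_left d₁ d₂))⟩ with hUrdef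
  set Vr : Matrix (Fin d₂) (Fin r) ℝ :=
    Matrix.of fun (i : Fin d₂) (j : Fin r) =>
      V i ⟨(j : ℕ), lt_of_lt_of_le j.isLt (hr2.trans (min_le_right d₁ d₂))⟩ with hVrdef
  have hUr : Urᵀ * Ur = 1 := by
    ext j k
    have h1 : (Uᵀ * U) ⟨(j : ℕ), lt_of_lt_of_le j.isLt (hr2.trans (min_le_left d₁ d₂))⟩
        ⟨(k : ℕ), lt_of_lt_of_le k.isLt (hr2.trans (min_le_left d₁ d₂))⟩
        = (1 : Matrix (Fin d₁) (Fin d₁) ℝ)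
          ⟨(j : ℕ), lt_of_lt_of_le j.isLt (hr2.trans (min_le_left d₁ d₂))⟩
          ⟨(k : ℕ), lt_of_lt_of_le k.isLt (hr2.trans (min_le_left d₁ d₂))⟩ := by rw [hU]
    simp only [Matrix.mul_apply, Matrix.transpose_apply, Matrix.one_apply, hUrdef,
      Matrix.of_apply, Fin.mk.injEq] at h1 ⊢
    rw [h1]
    by_cases h : j = k
    · simp [h]
    · simpa [h] using fun hh => h (Fin.ext hh)
  have hVr : Vrᵀ * Vr = 1 := by
    ext j k
    have h1 : (Vᵀ * V) ⟨(j : ℕ), lt_of_lt_of_le j.isLt (hr2.trans (min_le_right d₁ d₂))⟩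
        ⟨(k : ℕ), lt_of_lt_of_le k.isLt (hr2.trans (min_le_right d₁ d₂))⟩
        = (1 : Matrix (Fin d₂) (Fin d₂) ℝ)
          ⟨(j : ℕ), lt_of_lt_of_le j.isLt (hr2.trans (min_le_right d₁ d₂))⟩
          ⟨(k : ℕ), lt_of_lt_of_le k.isLt (hr2.trans (min_le_right d₁ d₂))⟩ := by rw [hV]
    simp only [Matrix.mul_apply, Matrix.transpose_apply, Matrix.one_apply, hVrdef,
      Matrix.of_apply, Fin.mk.injEq] at h1 ⊢
    rw [h1]
    by_cases h : j = k
    · simp [h]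
    · simpa [h] using fun hh => h (Fin.ext hh)
  set P : Matrix (Fin d₁) (Fin d₁) ℝ := Ur * Urᵀ with hPdef
  set Q : Matrix (Fin d₂) (Fin d₂) ℝ := Vr * Vrᵀ with hQdef
  set Δ'' : Matrix (Fin d₁) (Fin d₂) ℝ := (1 - P) * Δ * (1 - Q) with hD2def
  set Δ' : Matrix (Fin d₁) (Fin d₂) ℝ := Δ - Δ'' with hD1def
  have hcond3 : Urᵀ * Δ'' = 0 := by
    have h : Urᵀ * (1 - P) = 0 := by
      rw [hPdef, Matrix.mul_sub, Matrix.mul_one, ← Matrix.mul_assoc, hUr, Matrix.one_mul,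
        sub_self]
    rw [hD2def, ← Matrix.mul_assoc, ← Matrix.mul_assoc, h, Matrix.zero_mul, Matrix.zero_mul]
  have hcond4 : Δ'' * Vr = 0 := by
    have h : (1 - Q) * Vr = 0 := by
      rw [hQdef, Matrix.sub_mul, Matrix.one_mul, Matrix.mul_assoc, hVr, Matrix.mul_one,
        sub_self]
    rw [hD2def, Matrix.mul_assoc, h, Matrix.mul_zero]
  have hsplit : Δ' = Ur * (Urᵀ * Δ) + ((1 - P) * Δ * Vr) * Vrᵀ := by
    rw [hD1def, hD2def, hPdef, hQdef]
    simp only [Matrix.sub_mul, Matrix.mul_sub, Matrix.one_mul, Matrix.mul_one, Matrix.mul_assoc]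
    abel
  refine ⟨Δ', Δ'', by rw [hD1def]; abel, ?_, hcond3, hcond4, ?_⟩
  · calc Δ'.rank ≤ (Ur * (Urᵀ * Δ)).rank + (((1 - P) * Δ * Vr) * Vrᵀ).rank := by
          rw [hsplit]; exact matrix_rank_add_le_aux _ _
      _ ≤ r + r := by
          refine add_le_add ?_ ?_
          · exact le_trans (Matrix.rank_mul_le_left _ _)
              (by simpa using Matrix.rank_le_card_width Ur)
          · exact le_trans (Matrix.rank_mul_le_right _ _)
              (by simpa using Matrix.rank_le_card_height Vrᵀ)
      _ = 2 * r := by ring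
  · have h1 : Δ'ᵀ * Δ'' = (Urᵀ * Δ)ᵀ * (Urᵀ * Δ'') + Vr * (((1 - P) * Δ * Vr)ᵀ * Δ'') := by
      rw [hsplit]
      simp only [Matrix.transpose_add, Matrix.transpose_mul, Matrix.add_mul]
      simp only [Matrix.transpose_transpose, Matrix.mul_assoc]
    rw [tinner, h1, hcond3, Matrix.mul_zero, Matrix.trace_add, Matrix.trace_mul_comm,
      Matrix.mul_assoc, hcond4, Matrix.mul_zero]
    simp
end

section
/- Suppose p_λ satisfies Assumption 1 with parameters λ > 0 and μ ≥ 0, let P_λ(Θ) = ∑_j p_λ(σ_j(Θ)), and let L : ℝ^{d₁×d₂} → ℝ be differentiable with Taylor error satisfying T(Θ,Θ′) ≥ α₂‖Θ − Θ′‖_F² − τ₂‖Θ − Θ′‖_*² for all Θ, Θ′, with α₂ > 0 and τ₂ > 0. Let ω > 0, let Θ* and Θ satisfy ‖Θ*‖_* ≤ ω and ‖Θ‖_* ≤ ω, assume λ ≥ 4‖∇L(Θ*)‖_op and λ ≥ 8ωτ₂, and suppose Ψ(Θ) − Ψ(Θ*) ≤ δ for some δ ≥ 0, where Ψ = L + P_λ.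 Then P_λ(Θ) − P_λ(Θ*) ≤ (λ/2)‖Θ − Θ*‖_* + δ. -/
open Matrix Finset

attribute [local instance] Matrix.frobeniusNormedAddCommGroup Matrix.frobeniusNormedSpace

noncomputable section
namespace SpecAux
variable {d₁ d₂ : ℕ}

lemma hermT (A : Matrix (Fin d₁) (Fin d₂) ℝ) : (Aᵀ * A).IsHermitian := by
  simpa [Matrix.conjTranspose_eq_transpose_of_trivial] using
    Matrix.isHermitian_conjTranspose_mul_self A

def ev (A : Matrix (Fin d₁) (Fin d₂) ℝ) (j : Fin d₂) : ℝ :=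
  (hermT A).eigenvalues j
def evec (A : Matrix (Fin d₁) (Fin d₂) ℝ) (j : Fin d₂) : Fin d₂ → ℝ :=
  ⇑((hermT A).eigenvectorBasis j)

variable (A : Matrix (Fin d₁) (Fin d₂) ℝ)

lemma ev_nonneg (j : Fin d₂) : 0 ≤ ev A j :=
  Matrix.eigenvalues_conjTranspose_mul_self_nonneg A j
lemma svals_nonneg (j : Fin d₂) : 0 ≤ svals A j := Real.sqrt_nonneg _
lemma sq_svals (j : Fin d₂) : svals A j ^ 2 = ev A j := Real.sq_sqrt (ev_nonneg A j)
lemma svals_eq_sqrt (j : Fin d₂) : svals A j = Real.sqrt (ev A j) := rfl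

lemma gram_mulVec (j : Fin d₂) : (Aᴴ * A) *ᵥ evec A j = ev A j • evec A j :=
  (hermT A).mulVec_eigenvectorBasis j

lemma evec_ortho (i j : Fin d₂) : evec A i ⬝ᵥ evec A j = if i = j then 1 else 0 := by
  have h := (hermT A).eigenvectorBasis.orthonormal
  rw [orthonormal_iff_ite] at h
  have := h i j
  simpa [evec, dotProduct, PiLp.inner_apply, RCLike.inner_apply, mul_comm] using this

lemma evec_complete (k l : Fin d₂) :
    ∑ j, evec A j k * evec A j l = if k = l then 1 else 0 := by
  have hU := (hermT A).eigenvectorUnitary.2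
  rw [Matrix.mem_unitaryGroup_iff] at hU
  have h2 : (((hermT A).eigenvectorUnitary :
      Matrix (Fin d₂) (Fin d₂) ℝ) * star ((hermT A).eigenvectorUnitary :
      Matrix (Fin d₂) (Fin d₂) ℝ)) k l = (1 : Matrix (Fin d₂) (Fin d₂) ℝ) k l := by rw [hU]
  simpa [Matrix.mul_apply, Matrix.one_apply, Matrix.star_apply, evec,
    Matrix.IsHermitian.eigenvectorUnitary_apply] using h2

lemma svals_le_opNorm (j : Fin d₂) : svals A j ≤ opNorm A :=
  le_ciSup (Set.Finite.bddAbove (Set.finite_range _)) j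

lemma opNorm_nonneg : 0 ≤ opNorm A := by
  rcases isEmpty_or_nonempty (Fin d₂) with h | h
  · simp [opNorm, Real.iSup_of_isEmpty]
  · exact (svals_nonneg A (Classical.arbitrary _)).trans (svals_le_opNorm A _)

lemma opNorm_le {c : ℝ} (hc : 0 ≤ c) (h : ∀ j, svals A j ≤ c) : opNorm A ≤ c := by
  rcases isEmpty_or_nonempty (Fin d₂) with he | he
  · simpa [opNorm, Real.iSup_of_isEmpty] using hc
  · exact ciSup_le h

lemma nuclearNorm_nonneg : 0 ≤ nuclearNorm A :=
  Finset.sum_nonneg fun j _ => svals_nonneg A j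

lemma sum_dot_mul_dot {n : ℕ} {v : Fin n → Fin n → ℝ}
    (hv : ∀ k l, ∑ j, v j k * v j l = if k = l then (1:ℝ) else 0) (x y : Fin n → ℝ) :
    ∑ j, (x ⬝ᵥ v j) * (y ⬝ᵥ v j) = x ⬝ᵥ y := by
  calc ∑ j, (x ⬝ᵥ v j) * (y ⬝ᵥ v j)
      = ∑ j, ∑ k, ∑ l, (x k * y l) * (v j k * v j l) := by
        refine Finset.sum_congr rfl fun j _ => ?_
        rw [dotProduct, dotProduct, Finset.sum_mul_sum]
        exact Finset.sum_congr rfl fun k _ => Finset.sum_congr rfl fun l _ => by ring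
    _ = ∑ k, ∑ l, (x k * y l) * ∑ j, (v j k * v j l) := by
        rw [Finset.sum_comm]
        refine Finset.sum_congr rfl fun k _ => ?_
        rw [Finset.sum_comm]
        exact Finset.sum_congr rfl fun l _ => (Finset.mul_sum _ _ _).symm
    _ = x ⬝ᵥ y := by
        simp only [hv, mul_ite, mul_one, mul_zero]
        simp [dotProduct]

lemma pair_dot (x : Fin d₂ → ℝ) (y : Fin d₂ → ℝ) :
    (A *ᵥ x) ⬝ᵥ (A *ᵥ y) = x ⬝ᵥ ((Aᴴ * A) *ᵥ y) := by
  rw [Matrix.dotProduct_mulVec, Matrix.vecMul_mulVec, ← Matrix.dotProduct_mulVec,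
    Matrix.conjTranspose_eq_transpose_of_trivial]

lemma mulVec_pair_eig (i j : Fin d₂) :
    (A *ᵥ evec A i) ⬝ᵥ (A *ᵥ evec A j) = if i = j then ev A i else 0 := by
  rw [pair_dot, gram_mulVec, dotProduct_smul, evec_ortho]
  by_cases h : i = j
  · subst h; simp
  · simp [h]

lemma norm_Av (j : Fin d₂) : (A *ᵥ evec A j) ⬝ᵥ (A *ᵥ evec A j) = ev A j := by
  simpa using mulVec_pair_eig A j j

lemma dot_le_sqrt {n : ℕ} (x y : Fin n → ℝ) :
    x ⬝ᵥ y ≤ Real.sqrt (x ⬝ᵥ x) * Real.sqrt (y ⬝ᵥ y) := by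
  have h := Finset.sum_mul_sq_le_sq_mul_sq Finset.univ x y
  have hx : x ⬝ᵥ x = ∑ i, x i ^ 2 := by simp [dotProduct, sq]
  have hy : y ⬝ᵥ y = ∑ i, y i ^ 2 := by simp [dotProduct, sq]
  calc x ⬝ᵥ y ≤ |x ⬝ᵥ y| := le_abs_self _
    _ = Real.sqrt ((x ⬝ᵥ y) ^ 2) := (Real.sqrt_sq_eq_abs _).symm
    _ ≤ Real.sqrt ((∑ i, x i ^ 2) * ∑ i, y i ^ 2) := Real.sqrt_le_sqrt h
    _ = Real.sqrt (x ⬝ᵥ x) * Real.sqrt (y ⬝ᵥ y) := by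
        rw [hx, hy, Real.sqrt_mul (by positivity)]

lemma mulVec_lincomb {m n N : ℕ} (B : Matrix (Fin m) (Fin n) ℝ) (c : Fin N → ℝ)
    (v : Fin N → Fin n → ℝ) :
    B *ᵥ (fun k => ∑ j, c j * v j k) = fun i => ∑ j, c j * (B *ᵥ v j) i := by
  funext i
  simp only [Matrix.mulVec, dotProduct, Finset.mul_sum]
  rw [Finset.sum_comm]
  exact Finset.sum_congr rfl fun j _ => Finset.sum_congr rfl fun k _ => by ring

lemma dot_self_lincomb {m N : ℕ} (c : Fin N → ℝ) (u : Fin N → Fin m → ℝ) (e : Fin N → ℝ)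
    (hu : ∀ j j', u j ⬝ᵥ u j' = if j = j' then e j else 0) :
    (fun i => ∑ j, c j * u j i) ⬝ᵥ (fun i => ∑ j, c j * u j i) = ∑ j, c j ^ 2 * e j := by
  calc (fun i => ∑ j, c j * u j i) ⬝ᵥ (fun i => ∑ j, c j * u j i)
      = ∑ i, ∑ j, ∑ j', (c j * c j') * (u j i * u j' i) := by
        refine Finset.sum_congr rfl fun i _ => ?_
        rw [Finset.sum_mul_sum]
        exact Finset.sum_congr rfl fun j _ => Finset.sum_congr rfl fun j' _ => by ring
    _ = ∑ j, ∑ j', (c j * c j') * (u j ⬝ᵥ u j') := by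
        rw [Finset.sum_comm]
        refine Finset.sum_congr rfl fun j _ => ?_
        rw [Finset.sum_comm]
        refine Finset.sum_congr rfl fun j' _ => ?_
        simp [dotProduct, Finset.mul_sum]
    _ = ∑ j, c j ^ 2 * e j := by
        simp only [hu, mul_ite, mul_zero]
        simp only [Finset.sum_ite_eq, Finset.mem_univ, if_true]
        exact Finset.sum_congr rfl fun j _ => by ring

lemma expand_w (w : Fin d₂ → ℝ) :
    w = fun k => ∑ j, (evec A j ⬝ᵥ w) * evec A j k := by
  funext k
  symm
  calc ∑ j, (evec A j ⬝ᵥ w) * evec A j k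
      = ∑ j, ∑ l, w l * (evec A j l * evec A j k) := by
        refine Finset.sum_congr rfl fun j _ => ?_
        rw [dotProduct, Finset.sum_mul]
        exact Finset.sum_congr rfl fun l _ => by ring
    _ = ∑ l, w l * ∑ j, (evec A j l * evec A j k) := by
        rw [Finset.sum_comm]
        exact Finset.sum_congr rfl fun l _ => (Finset.mul_sum _ _ _).symm
    _ = w k := by simp only [evec_complete, mul_ite, mul_one, mul_zero]; simp

lemma sum_inner_sq (w : Fin d₂ → ℝ) : ∑ j, (evec A j ⬝ᵥ w) ^ 2 = w ⬝ᵥ w := by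
  have h := sum_dot_mul_dot (evec_complete A) w w
  calc ∑ j, (evec A j ⬝ᵥ w) ^ 2 = ∑ j, (w ⬝ᵥ evec A j) * (w ⬝ᵥ evec A j) := by
        refine Finset.sum_congr rfl fun j _ => ?_
        rw [dotProduct_comm, sq]
    _ = w ⬝ᵥ w := h

lemma rayleigh (w : Fin d₂ → ℝ) :
    (A *ᵥ w) ⬝ᵥ (A *ᵥ w) ≤ opNorm A ^ 2 * (w ⬝ᵥ w) := by
  have hw : A *ᵥ w = fun i => ∑ j, (evec A j ⬝ᵥ w) * (A *ᵥ evec A j) i := by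
    conv_lhs => rw [expand_w A w]
    exact mulVec_lincomb A _ _
  rw [hw, dot_self_lincomb _ _ (ev A) (mulVec_pair_eig A)]
  calc ∑ j, (evec A j ⬝ᵥ w) ^ 2 * ev A j
      ≤ ∑ j, (evec A j ⬝ᵥ w) ^ 2 * opNorm A ^ 2 := by
        refine Finset.sum_le_sum fun j _ => ?_
        refine mul_le_mul_of_nonneg_left ?_ (sq_nonneg _)
        rw [← sq_svals]
        exact pow_le_pow_left₀ (svals_nonneg A j) (svals_le_opNorm A j) 2
    _ = opNorm A ^ 2 * (w ⬝ᵥ w) := by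
        rw [← Finset.sum_mul, sum_inner_sq, mul_comm]

lemma trace_expand (G : Matrix (Fin d₁) (Fin d₂) ℝ) :
    (Gᵀ * A).trace = ∑ j, (G *ᵥ evec A j) ⬝ᵥ (A *ᵥ evec A j) := by
  have h1 : (Gᵀ * A).trace = ∑ i, (fun k => G i k) ⬝ᵥ (fun k => A i k) := by
    simp only [Matrix.trace, Matrix.diag, Matrix.mul_apply, Matrix.transpose_apply, dotProduct]
    rw [Finset.sum_comm]
  have h2 : ∀ j, (G *ᵥ evec A j) ⬝ᵥ (A *ᵥ evec A j)
      = ∑ i, ((fun k => G i k) ⬝ᵥ evec A j) * ((fun k => A i k) ⬝ᵥ evec A j) := by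
    intro j; rfl
  rw [h1]
  calc ∑ i, (fun k => G i k) ⬝ᵥ (fun k => A i k)
      = ∑ i, ∑ j, ((fun k => G i k) ⬝ᵥ evec A j) * ((fun k => A i k) ⬝ᵥ evec A j) := by
        exact Finset.sum_congr rfl fun i _ =>
          (sum_dot_mul_dot (evec_complete A) _ _).symm
    _ = ∑ j, (G *ᵥ evec A j) ⬝ᵥ (A *ᵥ evec A j) := by
        rw [Finset.sum_comm]
        exact Finset.sum_congr rfl fun j _ => (h2 j).symm

lemma trace_dual (G : Matrix (Fin d₁) (Fin d₂) ℝ) :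
    (Gᵀ * A).trace ≤ opNorm G * nuclearNorm A := by
  rw [trace_expand]
  calc ∑ j, (G *ᵥ evec A j) ⬝ᵥ (A *ᵥ evec A j)
      ≤ ∑ j, Real.sqrt ((G *ᵥ evec A j) ⬝ᵥ (G *ᵥ evec A j)) *
          Real.sqrt ((A *ᵥ evec A j) ⬝ᵥ (A *ᵥ evec A j)) :=
        Finset.sum_le_sum fun j _ => dot_le_sqrt _ _
    _ ≤ ∑ j, opNorm G * svals A j := by
        refine Finset.sum_le_sum fun j _ => ?_
        have h2 : Real.sqrt ((A *ᵥ evec A j) ⬝ᵥ (A *ᵥ evec A j)) = svals A j := by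
          rw [norm_Av, svals_eq_sqrt]
        rw [h2]
        refine mul_le_mul_of_nonneg_right ?_ (svals_nonneg A j)
        have h3 := rayleigh G (evec A j)
        have h4 : evec A j ⬝ᵥ evec A j = 1 := by simpa using evec_ortho A j j
        rw [h4, mul_one] at h3
        calc Real.sqrt ((G *ᵥ evec A j) ⬝ᵥ (G *ᵥ evec A j))
            ≤ Real.sqrt (opNorm G ^ 2) := Real.sqrt_le_sqrt h3
          _ = opNorm G := by rw [Real.sqrt_sq (opNorm_nonneg G)]
    _ = opNorm G * nuclearNorm A := by rw [← Finset.mul_sum]; rfl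

end SpecAux
end


namespace SpecAux
variable {d₁ d₂ : ℕ}

lemma eig_congr {n : ℕ} {X Y : Matrix (Fin n) (Fin n) ℝ} (h : X = Y)
    (hX : X.IsHermitian) (hY : Y.IsHermitian) : hX.eigenvalues = hY.eigenvalues := by
  subst h; rfl

lemma svals_neg (A : Matrix (Fin d₁) (Fin d₂) ℝ) : svals (-A) = svals A := by
  funext j
  unfold svals
  rw [eig_congr (show (-A)ᵀ * (-A) = Aᵀ * A by simp)
    (hermT (-A)) (hermT A)]

lemma nuclearNorm_neg (A : Matrix (Fin d₁) (Fin d₂) ℝ) : nuclearNorm (-A) = nuclearNorm A := by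
  unfold nuclearNorm; rw [svals_neg]

lemma nuclearNorm_triangle (A B : Matrix (Fin d₁) (Fin d₂) ℝ) :
    nuclearNorm (A + B) ≤ nuclearNorm A + nuclearNorm B := by
  classical
  set M := A + B with hM
  set v : Fin d₂ → Fin d₂ → ℝ := evec M with hv
  set σ : Fin d₂ → ℝ := svals M with hσ
  set u : Fin d₂ → Fin d₁ → ℝ :=
    fun j => if σ j = 0 then 0 else (σ j)⁻¹ • (M *ᵥ v j) with hu_def
  have hMv : ∀ i j, (M *ᵥ v i) ⬝ᵥ (M *ᵥ v j) = if i = j then ev M i else 0 :=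
    mulVec_pair_eig M
  have hu_ortho : ∀ j j', u j ⬝ᵥ u j' = if j = j' then (if σ j = 0 then 1 else 1) * (if σ j = 0 then 0 else 1) else 0 := by
    intro j j'
    by_cases h : σ j = 0
    · simp [hu_def, h]
    · by_cases h' : σ j' = 0
      · have hne : j ≠ j' := by rintro rfl; exact h h'
        simp [hu_def, h', hne]
      · simp only [hu_def, if_neg h, if_neg h', smul_dotProduct,
          dotProduct_smul, hMv, smul_eq_mul]
        by_cases hjj : j = j'
        · subst hjj
          have : ev M j = σ j ^ 2 := (sq_svals M j).symm
          simp only [if_pos rfl, if_true, this, if_neg h]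
          field_simp
        · simp [hjj]
  have hu_ortho' : ∀ j j', u j ⬝ᵥ u j' = if j = j' then (if σ j = 0 then 0 else 1) else 0 := by
    intro j j'; rw [hu_ortho j j']; by_cases h : j = j' <;> by_cases h2 : σ j = 0 <;> simp [h, h2]
  have hσu : ∀ j, σ j = u j ⬝ᵥ (M *ᵥ v j) := by
    intro j
    by_cases h : σ j = 0
    · simp [hu_def, h]
    · simp only [hu_def, if_neg h, smul_dotProduct, hMv, if_pos rfl, if_true, smul_eq_mul]
      have : ev M j = σ j ^ 2 := (sq_svals M j).symm
      rw [this]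
      field_simp
  set G : Matrix (Fin d₁) (Fin d₂) ℝ := Matrix.of (fun i k => ∑ j, u j i * v j k) with hG
  have hGtrace : ∀ C : Matrix (Fin d₁) (Fin d₂) ℝ,
      (Gᵀ * C).trace = ∑ j, u j ⬝ᵥ (C *ᵥ v j) := by
    intro C
    calc (Gᵀ * C).trace = ∑ i, ∑ k, G i k * C i k := by
          simp only [Matrix.trace, Matrix.diag, Matrix.mul_apply, Matrix.transpose_apply]
          rw [Finset.sum_comm]
      _ = ∑ i, ∑ k, ∑ j, u j i * (C i k * v j k) := by
          refine Finset.sum_congr rfl fun i _ => Finset.sum_congr rfl fun k _ => ?_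
          rw [hG, Matrix.of_apply, Finset.sum_mul]
          exact Finset.sum_congr rfl fun j _ => by ring
      _ = ∑ i, ∑ j, ∑ k, u j i * (C i k * v j k) :=
          Finset.sum_congr rfl fun i _ => Finset.sum_comm
      _ = ∑ j, ∑ i, ∑ k, u j i * (C i k * v j k) := Finset.sum_comm
      _ = ∑ j, u j ⬝ᵥ (C *ᵥ v j) := by
          refine Finset.sum_congr rfl fun j _ => ?_
          simp only [dotProduct, Matrix.mulVec, Finset.mul_sum]
  have hGw : ∀ w : Fin d₂ → ℝ, G *ᵥ w = fun i => ∑ j, (v j ⬝ᵥ w) * u j i := by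
    intro w
    funext i
    simp only [Matrix.mulVec, dotProduct, hG, Matrix.of_apply, Finset.sum_mul]
    rw [Finset.sum_comm]
    refine Finset.sum_congr rfl fun j _ => ?_
    exact Finset.sum_congr rfl fun k _ => by ring
  have hGop : opNorm G ≤ 1 := by
    refine opNorm_le G zero_le_one fun j => ?_
    have h3 : ∀ w : Fin d₂ → ℝ, (G *ᵥ w) ⬝ᵥ (G *ᵥ w) ≤ w ⬝ᵥ w := by
      intro w
      rw [hGw w, dot_self_lincomb _ _ _ hu_ortho']
      calc ∑ j', (v j' ⬝ᵥ w) ^ 2 * (if σ j' = 0 then 0 else 1)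
          ≤ ∑ j', (v j' ⬝ᵥ w) ^ 2 := by
            refine Finset.sum_le_sum fun j' _ => ?_
            by_cases h : σ j' = 0 <;> simp [h, sq_nonneg]
        _ = w ⬝ᵥ w := sum_inner_sq M w
    have h2 := norm_Av G j
    have h4 := h3 (evec G j)
    rw [h2] at h4
    have h5 : evec G j ⬝ᵥ evec G j = 1 := by simpa using evec_ortho G j j
    rw [h5] at h4
    have h6 : svals G j ^ 2 ≤ 1 := by rw [sq_svals]; exact h4
    nlinarith [svals_nonneg G j]
  have key : nuclearNorm M = (Gᵀ * A).trace + (Gᵀ * B).trace := by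
    rw [hGtrace A, hGtrace B, ← Finset.sum_add_distrib]
    refine Finset.sum_congr rfl fun j _ => ?_
    have hMs : M *ᵥ v j = A *ᵥ v j + B *ᵥ v j := by rw [hM, Matrix.add_mulVec]
    calc σ j = u j ⬝ᵥ (M *ᵥ v j) := hσu j
      _ = u j ⬝ᵥ (A *ᵥ v j) + u j ⬝ᵥ (B *ᵥ v j) := by rw [hMs, dotProduct_add]
  have hA := trace_dual A G
  have hB := trace_dual B G
  calc nuclearNorm M = (Gᵀ * A).trace + (Gᵀ * B).trace := key
    _ ≤ opNorm G * nuclearNorm A + opNorm G * nuclearNorm B := add_le_add hA hB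
    _ ≤ 1 * nuclearNorm A + 1 * nuclearNorm B := by
        gcongr
        · exact nuclearNorm_nonneg A
        · exact nuclearNorm_nonneg B
    _ = nuclearNorm A + nuclearNorm B := by ring

end SpecAux


/-- The bound (lem-cone-claim) from the proof of Lemma 5: if `Ψ(Θ) - Ψ(Θ*) ≤ δ`
with `Ψ = L + P_λ`, then `P_λ(Θ) - P_λ(Θ*) ≤ (λ/2)‖Θ - Θ*‖_* + δ`. -/
theorem Pl_excess_bound {d₁ d₂ : ℕ}
    (lam μ ω α₂ τ₂ δ : ℝ)
    (hlam : 0 < lam) (hμ : 0 ≤ μ) (hω : 0 < ω) (hα : 0 < α₂) (hτ : 0 < τ₂) (hδ : 0 ≤ δ)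
    (p : ℝ → ℝ) (hp : Assumption1 p lam μ)
    (L : Matrix (Fin d₁) (Fin d₂) ℝ → ℝ)
    (gradL : Matrix (Fin d₁) (Fin d₂) ℝ → Matrix (Fin d₁) (Fin d₂) ℝ)
    (hdiff : Differentiable ℝ L)
    (hgrad : ∀ Θ Δ : Matrix (Fin d₁) (Fin d₂) ℝ, fderiv ℝ L Θ Δ = tinner (gradL Θ) Δ)
    (hRSC : ∀ Θ Θ' : Matrix (Fin d₁) (Fin d₂) ℝ,
      L Θ - L Θ' - tinner (gradL Θ') (Θ - Θ') ≥
        α₂ * frobNorm (Θ - Θ') ^ 2 - τ₂ * nuclearNorm (Θ - Θ') ^ 2)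
    (Θstar Θ : Matrix (Fin d₁) (Fin d₂) ℝ)
    (hfeas : nuclearNorm Θstar ≤ ω) (hfeas' : nuclearNorm Θ ≤ ω)
    (hlam1 : lam ≥ 4 * opNorm (gradL Θstar)) (hlam2 : lam ≥ 8 * ω * τ₂)
    (hΨ : (L Θ + Pl p Θ) - (L Θstar + Pl p Θstar) ≤ δ) :
    Pl p Θ - Pl p Θstar ≤ lam / 2 * nuclearNorm (Θ - Θstar) + δ := by
  have hdual : ∀ X : Matrix (Fin d₁) (Fin d₂) ℝ,
      tinner (gradL Θstar) X ≤ opNorm (gradL Θstar) * nuclearNorm X := by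
    intro X
    have h : tinner (gradL Θstar) X = ((gradL Θstar)ᵀ * X).trace := rfl
    rw [h]
    exact SpecAux.trace_dual X (gradL Θstar)
  set Δ := Θ - Θstar with hΔ
  set N := nuclearNorm Δ with hNdef
  have hN0 : 0 ≤ N := SpecAux.nuclearNorm_nonneg Δ
  have hN2 : N ≤ 2 * ω := by
    have h1 := SpecAux.nuclearNorm_triangle Θ (-Θstar)
    rw [SpecAux.nuclearNorm_neg] at h1
    have h2 : Θ + -Θstar = Δ := by rw [hΔ]; abel
    rw [h2] at h1
    linarith
  have hR := hRSC Θ Θstar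
  rw [← hΔ] at hR
  have hF : 0 ≤ α₂ * frobNorm Δ ^ 2 := mul_nonneg hα.le (sq_nonneg _)
  have hdualneg : -(tinner (gradL Θstar) Δ) ≤ lam / 4 * N := by
    have h1 : -(tinner (gradL Θstar) Δ) = tinner (gradL Θstar) (-Δ) := by
      show -((gradL Θstar)ᵀ * Δ).trace = ((gradL Θstar)ᵀ * (-Δ)).trace
      rw [Matrix.mul_neg, Matrix.trace_neg]
    rw [h1]
    have h2 := hdual (-Δ)
    rw [SpecAux.nuclearNorm_neg] at h2
    have h3 : opNorm (gradL Θstar) * N ≤ lam / 4 * N :=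
      mul_le_mul_of_nonneg_right (by linarith) hN0
    linarith
  have hτ : τ₂ * N ^ 2 ≤ lam / 4 * N := by
    have h1 : τ₂ * N ≤ lam / 4 := by nlinarith
    have h2 : τ₂ * N * N ≤ lam / 4 * N := mul_le_mul_of_nonneg_right h1 hN0
    nlinarith
  have hL : L Θstar - L Θ ≤ lam / 2 * N := by linarith
  linarith
end
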